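/- Let w ∈ Área_n and let 1 ≤ i ≤ n−1. Then ℓ(w·s_i) < ℓ(w) if and only if ℓ(w·t_i) > ℓ(w). -/

import Mathlib

namespace BnPaper

/-- The generator `t`: swaps `1` and `-1`, fixing all other points. -/
def t : Equiv.Perm ℤ := Equiv.swap 1 (-1)

/-- The generator `s i`: swaps `i ↔ i+1` and `-i ↔ -(i+1)`. -/
def s (i : ℤ) : Equiv.Perm ℤ := Equiv.swap i (i + 1) * Equiv.swap (-i) (-(i + 1))

/-- The descending product `s_j · s_{j-1} ⋯ s_i` (the identity when `i > j`). -/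
def desc (i j : ℕ) : Equiv.Perm ℤ :=
  ((List.range (j + 1 - i)).map (fun k => s ((j : ℤ) - (k : ℤ)))).prod

/-- The ascending product `s_i · s_{i+1} ⋯ s_j` (the identity when `i > j`). -/
def asc (i j : ℕ) : Equiv.Perm ℤ :=
  ((List.range (j + 1 - i)).map (fun k => s ((i : ℤ) + (k : ℤ)))).prod

/-- `t_j = s_{j-1} ⋯ s_1 · t · s_1 ⋯ s_{j-1}`. -/
def tt (j : ℕ) : Equiv.Perm ℤ := desc 1 (j - 1) * t * (desc 1 (j - 1))⁻¹

/-- The Coxeter generating set `{t, s_1, …, s_{n-1}}` of `W_n`. -/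
def gens (n : ℕ) : Set (Equiv.Perm ℤ) :=
  insert t {g | ∃ i : ℕ, 1 ≤ i ∧ i ≤ n - 1 ∧ g = s (i : ℤ)}

/-- The Coxeter length: the least number of generators whose product is `w`. -/
noncomputable def len (n : ℕ) (w : Equiv.Perm ℤ) : ℕ :=
  sInf {k | ∃ l : List (Equiv.Perm ℤ), l.length = k ∧ (∀ g ∈ l, g ∈ gens n) ∧ l.prod = w}

/-- `W_n` realised as the signed permutations of `{-n, …, -1, 1, …, n}`:
permutations of `ℤ` that are odd (`w(-i) = -w(i)`) and fix everything beyond `n` in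
absolute value. -/
def W (n : ℕ) : Set (Equiv.Perm ℤ) :=
  {w | (∀ i : ℤ, w (-i) = -(w i)) ∧ ∀ i : ℤ, (n : ℤ) < |i| → w i = i}

/-- The right descent set `Des(w)`. -/
def Des (n : ℕ) (w : Equiv.Perm ℤ) : Set (Equiv.Perm ℤ) :=
  {g | g ∈ gens n ∧ len n (w * g) < len n w}

/-- The enhanced descent-set invariant
`ρ_m(w) = Des(w) ∪ {t_j : 2 ≤ j ≤ m, ℓ(w t_j) < ℓ(w)}`. -/
def rho (n m : ℕ) (w : Equiv.Perm ℤ) : Set (Equiv.Perm ℤ) :=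
  Des n w ∪ {g | ∃ j : ℕ, 2 ≤ j ∧ j ≤ m ∧ g = tt j ∧ len n (w * tt j) < len n w}

/-- `Área_n`: the negative entries of the row form appear in increasing order and
the positive entries in strictly decreasing order. -/
def Area (n : ℕ) : Set (Equiv.Perm ℤ) :=
  {w | w ∈ W n ∧ ∀ i j : ℤ, 1 ≤ i → i < j → j ≤ (n : ℤ) →
    (w i < 0 → w j < 0 → w i < w j) ∧ (0 < w i → 0 < w j → w j < w i)}

/-- The suffix relation `y ≤_e w`: `w = z · y` with `ℓ(w) = ℓ(z) + ℓ(y)`. -/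
def Suf (n : ℕ) (y w : Equiv.Perm ℤ) : Prop :=
  ∃ z, z ∈ W n ∧ w = z * y ∧ len n w = len n z + len n y

/-- `a_q = (t)(s_1 t)(s_2 s_1 t) ⋯ (s_{q-1} ⋯ s_1 t)`. -/
def aw (q : ℕ) : Equiv.Perm ℤ := ((List.range q).map (fun k => desc 1 k * t)).prod

/-- `b_q = (s_{q+1})(s_{q+2} s_{q+1}) ⋯ (s_{n-1} ⋯ s_{q+1})` (identity for `q ≥ n-1`). -/
def bw (n q : ℕ) : Equiv.Perm ℤ :=
  ((List.range (n - 1 - q)).map (fun k => desc (q + 1) (q + 1 + k))).prod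

/-- `σ_{n,q} = a_q · b_q`. -/
def sig (n q : ℕ) : Equiv.Perm ℤ := aw q * bw n q

/-- `p_{n,q} = (s_{n-q} ⋯ s_1)(s_{n-q+1} ⋯ s_2) ⋯ (s_{n-1} ⋯ s_q)`,
with `p_{n,0} = p_{n,n} = e`. -/
def p (n q : ℕ) : Equiv.Perm ℤ :=
  ((List.range q).map (fun m => desc (1 + m) (n - q + m))).prod

/-- `Π_{n,q} = (s_{n-q-1} ⋯ s_1) · t · p_{n,q}`. -/
def PiElt (n q : ℕ) : Equiv.Perm ℤ := desc 1 (n - q - 1) * t * p n q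

/-- `Υ(w) = {z ∈ Área_n : Des(z) = Des(w)}`. -/
def Ups (n : ℕ) (w : Equiv.Perm ℤ) : Set (Equiv.Perm ℤ) :=
  {z | z ∈ Area n ∧ Des n z = Des n w}

/-- The parabolic subgroup `W_J = ⟨s_1, …, s_{n-1}⟩`. -/
def WJ (n : ℕ) : Set (Equiv.Perm ℤ) :=
  ↑(Subgroup.closure {g | ∃ i : ℕ, 1 ≤ i ∧ i ≤ n - 1 ∧ g = s (i : ℤ)})

/-- The parabolic subgroup `W_K = ⟨t, s_1, …, s_{n-2}⟩`. -/
def WK (n : ℕ) : Set (Equiv.Perm ℤ) :=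
  ↑(Subgroup.closure (insert t {g | ∃ i : ℕ, 1 ≤ i ∧ i ≤ n - 2 ∧ g = s (i : ℤ)}))

/-- Knuth relation of type `I_k` : `w' = w · s_{i+1}` when
`w(i+1) < w(i) < w(i+2)` or `w(i+2) < w(i) < w(i+1)`. -/
def stepI (k : ℕ) (w w' : Equiv.Perm ℤ) : Prop :=
  ∃ i : ℤ, 1 ≤ i ∧ i ≤ (k : ℤ) - 2 ∧
    ((w (i + 1) < w i ∧ w i < w (i + 2)) ∨ (w (i + 2) < w i ∧ w i < w (i + 1))) ∧
    w' = w * s (i + 1)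

/-- Knuth relation of type `II_k` : `w' = w · s_i` when
`w(i+1) < w(i+2) < w(i)` or `w(i) < w(i+2) < w(i+1)`. -/
def stepII (k : ℕ) (w w' : Equiv.Perm ℤ) : Prop :=
  ∃ i : ℤ, 1 ≤ i ∧ i ≤ (k : ℤ) - 2 ∧
    ((w (i + 1) < w (i + 2) ∧ w (i + 2) < w i) ∨ (w i < w (i + 2) ∧ w (i + 2) < w (i + 1))) ∧
    w' = w * s i

/-- Knuth relation of type `III_k` : `w' = w · s_i` when `w(i)` and `w(i+1)` have
opposite signs. -/
def stepIII (k : ℕ) (w w' : Equiv.Perm ℤ) : Prop :=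
  ∃ i : ℤ, 1 ≤ i ∧ i ≤ (k : ℤ) - 1 ∧
    ((w i < 0 ∧ 0 < w (i + 1)) ∨ (w (i + 1) < 0 ∧ 0 < w i)) ∧
    w' = w * s i


section Aux

open Finset

lemma perm_apply_inv_self (u : Equiv.Perm ℤ) (x : ℤ) : u (u⁻¹ x) = x :=
  Equiv.apply_symm_apply u x

lemma perm_inv_apply_self (u : Equiv.Perm ℤ) (x : ℤ) : u⁻¹ (u x) = x :=
  Equiv.symm_apply_apply u x

/-! ### Basic facts about the generators -/

lemma s_apply (i x : ℤ) (hi : 1 ≤ i) :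
    s i x = if x = i then i + 1 else if x = i + 1 then i else
      if x = -i then -(i + 1) else if x = -(i + 1) then -i else x := by
  simp only [s, Equiv.Perm.mul_apply, Equiv.swap_apply_def]
  split_ifs <;> omega

lemma s_s (i : ℤ) (hi : 1 ≤ i) (x : ℤ) : s i (s i x) = x := by
  rw [s_apply i x hi, s_apply _ _ hi]
  split_ifs <;> omega

lemma s_mul_self (i : ℤ) (hi : 1 ≤ i) : s i * s i = 1 :=
  Equiv.ext fun x => s_s i hi x

/-- The sign-flip at position `j`. -/
def flip (j : ℤ) : Equiv.Perm ℤ := Equiv.swap j (-j)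

lemma flip_apply (j x : ℤ) (hj : 1 ≤ j) :
    flip j x = if x = j then -j else if x = -j then j else x := by
  simp only [flip, Equiv.swap_apply_def]

lemma flip_one_eq_t : flip 1 = t := rfl

lemma flip_mul_self (j : ℤ) : flip j * flip j = 1 := by
  simp [flip, Equiv.swap_mul_self]

/-! ### The group `W n` -/

lemma one_mem_W (n : ℕ) : (1 : Equiv.Perm ℤ) ∈ W n := by
  constructor <;> intro i <;> simp

lemma mul_mem_W {n : ℕ} {u v : Equiv.Perm ℤ} (hu : u ∈ W n) (hv : v ∈ W n) :
    u * v ∈ W n := by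
  refine ⟨fun i => ?_, fun i hi => ?_⟩
  · simp [Equiv.Perm.mul_apply, hv.1 i, hu.1 (v i)]
  · simp [Equiv.Perm.mul_apply, hv.2 i hi, hu.2 i hi]

lemma inv_mem_W {n : ℕ} {u : Equiv.Perm ℤ} (hu : u ∈ W n) : u⁻¹ ∈ W n := by
  refine ⟨fun i => ?_, fun i hi => ?_⟩
  · have : u (u⁻¹ (-i)) = u (-(u⁻¹ i)) := by
      rw [perm_apply_inv_self, hu.1, perm_apply_inv_self]
    exact u.injective this
  · have : u i = i := hu.2 i hi
    calc u⁻¹ i = u⁻¹ (u i) := by rw [this]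
    _ = i := perm_inv_apply_self u i

lemma W_zero {n : ℕ} {u : Equiv.Perm ℤ} (hu : u ∈ W n) : u 0 = 0 := by
  have := hu.1 0
  simp at this
  omega

lemma W_ne_zero {n : ℕ} {u : Equiv.Perm ℤ} (hu : u ∈ W n) {k : ℤ} (hk : k ≠ 0) :
    u k ≠ 0 := by
  intro h
  exact hk (u.injective (h.trans (W_zero hu).symm))

lemma t_mem_W {n : ℕ} (hn : 1 ≤ n) : t ∈ W n := by
  constructor
  · intro i
    simp only [t, Equiv.swap_apply_def]
    split_ifs <;> omega
  · intro i hi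
    have hn' : (1 : ℤ) ≤ (n : ℤ) := by exact_mod_cast hn
    rw [lt_abs] at hi
    simp only [t, Equiv.swap_apply_def]
    split_ifs <;> omega

lemma s_mem_W {n : ℕ} {i : ℤ} (hi : 1 ≤ i) (hin : i + 1 ≤ (n : ℤ)) : s i ∈ W n := by
  constructor
  · intro x
    rw [s_apply _ _ hi, s_apply _ _ hi]
    split_ifs <;> omega
  · intro x hx
    rw [lt_abs] at hx
    rw [s_apply _ _ hi]
    split_ifs <;> omega

lemma flip_mem_W {n : ℕ} {j : ℤ} (hj : 1 ≤ j) (hjn : j ≤ (n : ℤ)) : flip j ∈ W n := by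
  constructor
  · intro x
    rw [flip_apply _ _ hj, flip_apply _ _ hj]
    split_ifs <;> omega
  · intro x hx
    rw [lt_abs] at hx
    rw [flip_apply _ _ hj]
    split_ifs <;> omega

/-! ### `tt j` is the sign flip at position `j` -/

lemma desc_eq (i j : ℕ) :
    desc i j = ((List.range (j + 1 - i)).map (fun k : ℕ => s ((j : ℤ) - (k : ℤ)))).prod := by
  unfold desc
  congr 1
  induction List.range (j + 1 - i) with
  | nil => rfl
  | cons a l ih => simp_all [List.flatMap_cons]

lemma desc_one_zero : desc 1 0 = 1 := by
  rw [desc_eq]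
  simp

lemma desc_one_succ (j : ℕ) : desc 1 (j + 1) = s ((j : ℤ) + 1) * desc 1 j := by
  rw [desc_eq, desc_eq]
  simp only [Nat.add_sub_cancel]
  rw [List.range_succ_eq_map, List.map_cons, List.prod_cons, List.map_map]
  have h2 : List.map ((fun k : ℕ => s (((j + 1 : ℕ) : ℤ) - (k : ℤ))) ∘ Nat.succ) (List.range j)
      = List.map (fun k : ℕ => s ((j : ℤ) - (k : ℤ))) (List.range j) := by
    apply List.map_congr_left
    intro a _
    simp only [Function.comp_apply]
    congr 1
    push_cast
    ring
  rw [h2]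
  have h1 : (((j + 1 : ℕ) : ℤ) - ((0 : ℕ) : ℤ)) = (j : ℤ) + 1 := by push_cast; ring
  rw [h1]

lemma desc_one_apply (j : ℕ) :
    desc 1 j 1 = (j : ℤ) + 1 ∧ desc 1 j (-1) = -((j : ℤ) + 1) := by
  induction j with
  | zero => simp [desc_one_zero]
  | succ j ih =>
    have hj1 : (1 : ℤ) ≤ (j : ℤ) + 1 := by omega
    rw [desc_one_succ]
    constructor
    · rw [Equiv.Perm.mul_apply, ih.1, s_apply _ _ hj1]
      split_ifs <;> push_cast <;> omega
    · rw [Equiv.Perm.mul_apply, ih.2, s_apply _ _ hj1]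
      split_ifs <;> push_cast <;> omega

lemma tt_eq_flip {j : ℕ} (hj : 1 ≤ j) : tt j = flip (j : ℤ) := by
  unfold tt flip t
  rw [← Equiv.swap_apply_apply (desc 1 (j - 1)) 1 (-1)]
  have h1 := (desc_one_apply (j - 1)).1
  have h2 := (desc_one_apply (j - 1)).2
  have hc : ((j - 1 : ℕ) : ℤ) + 1 = (j : ℤ) := by
    have : (1:ℕ) ≤ j := hj
    push_cast [Nat.cast_sub this]
    ring
  rw [h1, h2, hc]

/-! ### The length statistic -/

noncomputable def invZ (n : ℕ) (w : Equiv.Perm ℤ) : ℤ :=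
  ∑ a ∈ Finset.Icc (1 : ℤ) (n : ℤ), ∑ b ∈ Finset.Icc (1 : ℤ) (n : ℤ),
    if a < b ∧ w b < w a then 1 else 0

noncomputable def negZ (n : ℕ) (w : Equiv.Perm ℤ) : ℤ :=
  ∑ k ∈ Finset.Icc (1 : ℤ) (n : ℤ), if w k < 0 then -(w k) else 0

noncomputable def NZ (n : ℕ) (w : Equiv.Perm ℤ) : ℤ := invZ n w + negZ n w

lemma NZ_nonneg (n : ℕ) (w : Equiv.Perm ℤ) : 0 ≤ NZ n w := by
  unfold NZ invZ negZ
  apply add_nonneg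
  · apply Finset.sum_nonneg
    intro a _
    apply Finset.sum_nonneg
    intro b _
    split_ifs <;> omega
  · apply Finset.sum_nonneg
    intro k _
    split_ifs <;> omega

lemma NZ_one (n : ℕ) : NZ n 1 = 0 := by
  have h1 : invZ n 1 = 0 :=
    Finset.sum_eq_zero fun a _ => Finset.sum_eq_zero fun b _ => by
      simp only [Equiv.Perm.one_apply]
      exact if_neg (by omega)
  have h2 : negZ n 1 = 0 :=
    Finset.sum_eq_zero fun k hk => by
      rw [Finset.mem_Icc] at hk
      simp only [Equiv.Perm.one_apply]
      exact if_neg (by omega)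
  show invZ n 1 + negZ n 1 = 0
  rw [h1, h2, add_zero]

/-- The key counting fact: a signed permutation takes, within the window `[1,n]`,
exactly `a-1` values of absolute value `< a`. -/
lemma count_abs {n : ℕ} {u : Equiv.Perm ℤ} (hu : u ∈ W n) {a : ℤ} (ha : 1 ≤ a)
    (han : a ≤ (n : ℤ)) :
    ∑ k ∈ Finset.Icc (1 : ℤ) (n : ℤ), (if -a < u k ∧ u k < a then (1 : ℤ) else 0) = a - 1 := by
  have hu' := inv_mem_W hu
  rw [Finset.sum_boole]
  have hcard : ((Finset.Icc (1 : ℤ) (n : ℤ)).filter fun k => -a < u k ∧ u k < a).card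
      = (Finset.Icc (1 : ℤ) (a - 1)).card := by
    apply Finset.card_nbij' (fun k => |u k|) (fun m => |u⁻¹ m|)
    · intro k hk
      simp only [Finset.coe_filter, Finset.mem_coe, Set.mem_setOf_eq, Finset.mem_filter, Finset.mem_Icc] at hk ⊢
      obtain ⟨⟨hk1, hkn⟩, hlo, hhi⟩ := hk
      have h0 : u k ≠ 0 := W_ne_zero hu (by omega)
      rcases abs_cases (u k) with ⟨h1, h2⟩ | ⟨h1, h2⟩ <;> rw [h1] <;> omega
    · intro m hm
      simp only [Finset.coe_Icc, Set.mem_Icc, Finset.mem_coe, Finset.mem_Icc] at hm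
      simp only [Finset.coe_filter, Finset.mem_coe, Set.mem_setOf_eq, Finset.mem_filter, Finset.mem_Icc]
      have h0 : u⁻¹ m ≠ 0 := W_ne_zero hu' (by omega)
      have hxn : |u⁻¹ m| ≤ (n : ℤ) := by
        by_contra hcon
        push_neg at hcon
        have hfix : u (u⁻¹ m) = u⁻¹ m := hu.2 _ hcon
        rw [perm_apply_inv_self] at hfix
        rw [← hfix] at hcon
        rcases abs_cases m with ⟨h1, _⟩ | ⟨h1, _⟩ <;> omega
      refine ⟨⟨?_, hxn⟩, ?_⟩
      · rcases abs_cases (u⁻¹ m) with ⟨h1, _⟩ | ⟨h1, _⟩ <;> omega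
      · rcases le_or_gt 0 (u⁻¹ m) with hx | hx
        · rw [abs_of_nonneg hx, perm_apply_inv_self]
          constructor <;> omega
        · rw [abs_of_neg hx, hu.1, perm_apply_inv_self]
          constructor <;> omega
    · intro k hk
      simp only [Finset.coe_filter, Finset.mem_coe, Set.mem_setOf_eq, Finset.mem_filter, Finset.mem_Icc] at hk
      obtain ⟨⟨hk1, hkn⟩, _, _⟩ := hk
      beta_reduce
      rcases le_or_gt 0 (u k) with h | h
      · rw [abs_of_nonneg h, perm_inv_apply_self, abs_of_nonneg (by omega : (0:ℤ) ≤ k)]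
      · rw [abs_of_neg h]
        have hh : u⁻¹ (-(u k)) = -k := by rw [hu'.1, perm_inv_apply_self]
        rw [hh, abs_neg, abs_of_nonneg (by omega : (0:ℤ) ≤ k)]
    · intro m hm
      simp only [Finset.coe_Icc, Set.mem_Icc, Finset.mem_coe, Finset.mem_Icc] at hm
      beta_reduce
      rcases le_or_gt 0 (u⁻¹ m) with h | h
      · rw [abs_of_nonneg h, perm_apply_inv_self, abs_of_nonneg (by omega : (0:ℤ) ≤ m)]
      · rw [abs_of_neg h, hu.1, perm_apply_inv_self, abs_neg,
          abs_of_nonneg (by omega : (0:ℤ) ≤ m)]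
  rw [hcard, Int.card_Icc]
  omega

/-! ### Effect of right multiplication by `s i` on the statistic -/

lemma s_apply_self (i : ℤ) (hi : 1 ≤ i) : s i i = i + 1 := by
  rw [s_apply i i hi]; simp

lemma s_apply_succ (i : ℤ) (hi : 1 ≤ i) : s i (i + 1) = i := by
  rw [s_apply i (i + 1) hi]; split_ifs <;> omega

lemma NZ_mul_s {n : ℕ} (w : Equiv.Perm ℤ) {i : ℤ} (hi : 1 ≤ i) (hin : i + 1 ≤ (n : ℤ))
    (hasc : w i < w (i + 1)) : NZ n (w * s i) = NZ n w + 1 := by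
  have hiff : ∀ x : ℤ, x ∈ Finset.Icc (1 : ℤ) (n : ℤ) ↔ s i x ∈ Finset.Icc (1 : ℤ) (n : ℤ) := by
    intro x
    rw [Finset.mem_Icc, Finset.mem_Icc, s_apply _ _ hi]
    split_ifs <;> omega
  have hneg : negZ n (w * s i) = negZ n w :=
    Finset.sum_equiv (s i) hiff (fun x _ => rfl)
  have hi1S : (i + 1 : ℤ) ∈ Finset.Icc (1 : ℤ) (n : ℤ) := Finset.mem_Icc.2 ⟨by omega, by omega⟩
  have hiS : (i : ℤ) ∈ Finset.Icc (1 : ℤ) (n : ℤ) := Finset.mem_Icc.2 ⟨hi, by omega⟩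
  have hpt : ∀ a ∈ Finset.Icc (1 : ℤ) (n : ℤ), ∀ b ∈ Finset.Icc (1 : ℤ) (n : ℤ),
      ¬(a = i + 1 ∧ b = i) →
      (if s i a < s i b ∧ w b < w a then (1 : ℤ) else 0)
        = if a < b ∧ w b < w a then (1 : ℤ) else 0 := by
    intro a ha b hb hne
    rw [Finset.mem_Icc] at ha hb
    by_cases hab : a = i ∧ b = i + 1
    · obtain ⟨rfl, rfl⟩ := hab
      have h1 := not_lt.2 hasc.le
      rw [if_neg (fun hcon => h1 hcon.2), if_neg (fun hcon => h1 hcon.2)]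
    · have h2 : s i a < s i b ↔ a < b := by
        rw [s_apply i a hi, s_apply i b hi]
        split_ifs <;> omega
      simp only [h2]
  have hinv : invZ n (w * s i) = invZ n w + 1 := by
    have e1 : invZ n (w * s i)
        = ∑ a ∈ Finset.Icc (1 : ℤ) (n : ℤ), ∑ b ∈ Finset.Icc (1 : ℤ) (n : ℤ),
            if s i a < s i b ∧ w b < w a then (1 : ℤ) else 0 := by
      unfold invZ
      refine Finset.sum_equiv (s i) hiff (fun a _ => ?_)
      refine Finset.sum_equiv (s i) hiff (fun b _ => ?_)
      simp only [Equiv.Perm.mul_apply, s_s i hi]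
      exact if_congr Iff.rfl rfl rfl
    have hdiff : (∑ a ∈ Finset.Icc (1 : ℤ) (n : ℤ), ∑ b ∈ Finset.Icc (1 : ℤ) (n : ℤ),
        ((if s i a < s i b ∧ w b < w a then (1 : ℤ) else 0)
          - if a < b ∧ w b < w a then (1 : ℤ) else 0)) = 1 := by
      rw [Finset.sum_eq_single_of_mem (i + 1) hi1S]
      · rw [Finset.sum_eq_single_of_mem i hiS]
        · rw [s_apply_succ i hi, s_apply_self i hi,
            if_pos ⟨by omega, hasc⟩, if_neg (fun hcon => absurd hcon.1 (by omega))]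
          norm_num
        · intro b hb hbne
          rw [hpt (i + 1) hi1S b hb (fun h => hbne h.2), sub_self]
      · intro a ha hane
        apply Finset.sum_eq_zero
        intro b hb
        rw [hpt a ha b hb (fun h => hane h.1), sub_self]
    simp only [Finset.sum_sub_distrib] at hdiff
    rw [e1]
    unfold invZ
    linarith [hdiff]
  show invZ n (w * s i) + negZ n (w * s i) = invZ n w + negZ n w + 1
  rw [hinv, hneg]
  ring

lemma NZ_mul_s_desc {n : ℕ} (w : Equiv.Perm ℤ) {i : ℤ} (hi : 1 ≤ i) (hin : i + 1 ≤ (n : ℤ))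
    (hdesc : w (i + 1) < w i) : NZ n (w * s i) + 1 = NZ n w := by
  have h1 : (w * s i) i < (w * s i) (i + 1) := by
    rw [Equiv.Perm.mul_apply, Equiv.Perm.mul_apply, s_apply_self i hi, s_apply_succ i hi]
    exact hdesc
  have h2 := NZ_mul_s (n := n) (w * s i) hi hin h1
  rw [mul_assoc, s_mul_self i hi, mul_one] at h2
  omega

/-! ### Effect of right multiplication by `flip j` on the statistic -/

lemma invZ_decomp (n : ℕ) {j : ℤ} (hjS : j ∈ Finset.Icc (1 : ℤ) (n : ℤ)) (v : Equiv.Perm ℤ) :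
    invZ n v
      = (∑ b ∈ (Finset.Icc (1 : ℤ) (n : ℤ)).erase j, if j < b ∧ v b < v j then (1 : ℤ) else 0)
        + ((∑ x ∈ (Finset.Icc (1 : ℤ) (n : ℤ)).erase j, if x < j ∧ v j < v x then (1 : ℤ) else 0)
        + ∑ x ∈ (Finset.Icc (1 : ℤ) (n : ℤ)).erase j, ∑ b ∈ (Finset.Icc (1 : ℤ) (n : ℤ)).erase j,
            if x < b ∧ v b < v x then (1 : ℤ) else 0) := by
  unfold invZ
  rw [← Finset.add_sum_erase _
    (fun x => ∑ b ∈ Finset.Icc (1 : ℤ) (n : ℤ), if x < b ∧ v b < v x then (1 : ℤ) else 0) hjS]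
  rw [← Finset.add_sum_erase _
    (fun b => if j < b ∧ v b < v j then (1 : ℤ) else 0) hjS]
  rw [if_neg (fun h => lt_irrefl j h.1), zero_add]
  have hinner : ∀ x : ℤ,
      (∑ b ∈ Finset.Icc (1 : ℤ) (n : ℤ), if x < b ∧ v b < v x then (1 : ℤ) else 0)
        = (if x < j ∧ v j < v x then (1 : ℤ) else 0)
          + ∑ b ∈ (Finset.Icc (1 : ℤ) (n : ℤ)).erase j, if x < b ∧ v b < v x then (1 : ℤ) else 0 :=
    fun x => (Finset.add_sum_erase _ _ hjS).symm
  rw [Finset.sum_congr rfl (fun x _ => hinner x), Finset.sum_add_distrib]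

lemma W_apply_abs_le {n : ℕ} {u : Equiv.Perm ℤ} (hu : u ∈ W n) {k : ℤ} (hk1 : 1 ≤ k)
    (hkn : k ≤ (n : ℤ)) : |u k| ≤ (n : ℤ) := by
  by_contra h
  push_neg at h
  have h2 : u⁻¹ (u k) = u k := (inv_mem_W hu).2 _ h
  rw [perm_inv_apply_self] at h2
  rw [← h2] at h
  rcases abs_cases k with ⟨he, _⟩ | ⟨he, _⟩ <;> omega

lemma NZ_mul_flip_pos {n : ℕ} {u : Equiv.Perm ℤ} (hu : u ∈ W n) {j : ℤ} (hj : 1 ≤ j)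
    (hjn : j ≤ (n : ℤ)) (ha : 0 < u j) : NZ n u < NZ n (u * flip j) := by
  have hjS : j ∈ Finset.Icc (1 : ℤ) (n : ℤ) := Finset.mem_Icc.2 ⟨hj, hjn⟩
  have happj : (u * flip j) j = -(u j) := by
    rw [Equiv.Perm.mul_apply, flip_apply _ _ hj, if_pos rfl, hu.1]
  have happ : ∀ x : ℤ, x ∈ (Finset.Icc (1 : ℤ) (n : ℤ)).erase j → (u * flip j) x = u x := by
    intro x hx
    rw [Finset.mem_erase, Finset.mem_Icc] at hx
    rw [Equiv.Perm.mul_apply, flip_apply _ _ hj]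
    split_ifs with h1 h2
    · exact absurd h1 hx.1
    · exact absurd h2 (by omega)
    · rfl
  have han : u j ≤ (n : ℤ) := by
    have := W_apply_abs_le hu hj hjn
    rcases abs_cases (u j) with ⟨h1, _⟩ | ⟨h1, _⟩ <;> omega
  -- counting
  have hcount : ∑ b ∈ (Finset.Icc (1 : ℤ) (n : ℤ)).erase j,
      (if -(u j) < u b ∧ u b < u j then (1 : ℤ) else 0) = u j - 1 := by
    have hsplit := Finset.add_sum_erase (Finset.Icc (1 : ℤ) (n : ℤ))
      (fun b => if -(u j) < u b ∧ u b < u j then (1 : ℤ) else 0) hjS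
    rw [if_neg (fun h => lt_irrefl _ h.2)] at hsplit
    have hSc := count_abs hu (by omega : 1 ≤ u j) han
    linarith
  -- decompose both sides
  have hd1 := invZ_decomp n hjS (u * flip j)
  have hd2 := invZ_decomp n hjS u
  have hrow : (∑ b ∈ (Finset.Icc (1 : ℤ) (n : ℤ)).erase j,
      if j < b ∧ (u * flip j) b < (u * flip j) j then (1 : ℤ) else 0)
      = ∑ b ∈ (Finset.Icc (1 : ℤ) (n : ℤ)).erase j,
        if j < b ∧ u b < -(u j) then (1 : ℤ) else 0 :=
    Finset.sum_congr rfl fun b hb => by rw [happ b hb, happj]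
  have hcol : (∑ x ∈ (Finset.Icc (1 : ℤ) (n : ℤ)).erase j,
      if x < j ∧ (u * flip j) j < (u * flip j) x then (1 : ℤ) else 0)
      = ∑ x ∈ (Finset.Icc (1 : ℤ) (n : ℤ)).erase j,
        if x < j ∧ -(u j) < u x then (1 : ℤ) else 0 :=
    Finset.sum_congr rfl fun x hx => by rw [happ x hx, happj]
  have hcore : (∑ x ∈ (Finset.Icc (1 : ℤ) (n : ℤ)).erase j,
      ∑ b ∈ (Finset.Icc (1 : ℤ) (n : ℤ)).erase j,
        if x < b ∧ (u * flip j) b < (u * flip j) x then (1 : ℤ) else 0)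
      = ∑ x ∈ (Finset.Icc (1 : ℤ) (n : ℤ)).erase j,
        ∑ b ∈ (Finset.Icc (1 : ℤ) (n : ℤ)).erase j,
          if x < b ∧ u b < u x then (1 : ℤ) else 0 :=
    Finset.sum_congr rfl fun x hx => Finset.sum_congr rfl fun b hb => by
      rw [happ b hb, happ x hx]
  rw [hrow, hcol, hcore] at hd1
  -- negZ
  have hnegL := Finset.add_sum_erase (Finset.Icc (1 : ℤ) (n : ℤ))
    (fun k => if (u * flip j) k < 0 then -((u * flip j) k) else 0) hjS
  rw [happj, if_pos (by omega : -(u j) < 0), neg_neg] at hnegL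
  have htail : (∑ k ∈ (Finset.Icc (1 : ℤ) (n : ℤ)).erase j,
      if (u * flip j) k < 0 then -((u * flip j) k) else 0)
      = ∑ k ∈ (Finset.Icc (1 : ℤ) (n : ℤ)).erase j, if u k < 0 then -(u k) else 0 :=
    Finset.sum_congr rfl fun k hk => by rw [happ k hk]
  rw [htail] at hnegL
  have hnegR := Finset.add_sum_erase (Finset.Icc (1 : ℤ) (n : ℤ))
    (fun k => if u k < 0 then -(u k) else 0) hjS
  rw [if_neg (by omega : ¬ u j < 0), zero_add] at hnegR
  -- pointwise bounds
  have hrowbound : (∑ b ∈ (Finset.Icc (1 : ℤ) (n : ℤ)).erase j,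
      ((if j < b ∧ u b < u j then (1 : ℤ) else 0)
        - if -(u j) < u b ∧ u b < u j then (1 : ℤ) else 0))
      ≤ ∑ b ∈ (Finset.Icc (1 : ℤ) (n : ℤ)).erase j,
        if j < b ∧ u b < -(u j) then (1 : ℤ) else 0 := by
    apply Finset.sum_le_sum
    intro b hb
    have hb' := hb
    rw [Finset.mem_erase, Finset.mem_Icc] at hb'
    have hne1 : u b ≠ u j := fun h => hb'.1 (u.injective h)
    have hne2 : u b ≠ -(u j) := by
      intro h
      have h3 : u b = u (-j) := by rw [hu.1]; exact h
      have h4 := u.injective h3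
      omega
    split_ifs <;> omega
  have hcolbound : (∑ x ∈ (Finset.Icc (1 : ℤ) (n : ℤ)).erase j,
      if x < j ∧ u j < u x then (1 : ℤ) else 0)
      ≤ ∑ x ∈ (Finset.Icc (1 : ℤ) (n : ℤ)).erase j,
        if x < j ∧ -(u j) < u x then (1 : ℤ) else 0 := by
    apply Finset.sum_le_sum
    intro x _
    split_ifs <;> omega
  rw [Finset.sum_sub_distrib] at hrowbound
  show invZ n u + negZ n u < invZ n (u * flip j) + negZ n (u * flip j)
  unfold negZ
  rw [hd1, hd2, ← hnegL, ← hnegR]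
  linarith

lemma NZ_mul_flip_neg {n : ℕ} {u : Equiv.Perm ℤ} (hu : u ∈ W n) {j : ℤ} (hj : 1 ≤ j)
    (hjn : j ≤ (n : ℤ)) (ha : u j < 0) : NZ n (u * flip j) < NZ n u := by
  have hmem : u * flip j ∈ W n := mul_mem_W hu (flip_mem_W hj hjn)
  have happj : (u * flip j) j = -(u j) := by
    rw [Equiv.Perm.mul_apply, flip_apply _ _ hj, if_pos rfl, hu.1]
  have h := NZ_mul_flip_pos hmem hj hjn (by rw [happj]; omega)
  rwa [mul_assoc, flip_mul_self, mul_one] at h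

/-! ### The exact effect of right multiplication by `t` -/

lemma NZ_mul_t_pos {n : ℕ} (hn : 1 ≤ n) {u : Equiv.Perm ℤ} (hu : u ∈ W n)
    (ha : 0 < u 1) : NZ n (u * t) = NZ n u + 1 := by
  rw [← flip_one_eq_t]
  have hj : (1 : ℤ) ≤ 1 := le_refl 1
  have hjn : (1 : ℤ) ≤ (n : ℤ) := by exact_mod_cast hn
  have hjS : (1 : ℤ) ∈ Finset.Icc (1 : ℤ) (n : ℤ) := Finset.mem_Icc.2 ⟨hj, hjn⟩
  have happj : (u * flip 1) 1 = -(u 1) := by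
    rw [Equiv.Perm.mul_apply, flip_apply _ _ hj, if_pos rfl, hu.1]
  have happ : ∀ x : ℤ, x ∈ (Finset.Icc (1 : ℤ) (n : ℤ)).erase 1 → (u * flip 1) x = u x := by
    intro x hx
    rw [Finset.mem_erase, Finset.mem_Icc] at hx
    rw [Equiv.Perm.mul_apply, flip_apply _ _ hj]
    split_ifs with h1 h2
    · exact absurd h1 hx.1
    · exact absurd h2 (by omega)
    · rfl
  have han : u 1 ≤ (n : ℤ) := by
    have := W_apply_abs_le hu hj hjn
    rcases abs_cases (u 1) with ⟨h1, _⟩ | ⟨h1, _⟩ <;> omega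
  have hcount : ∑ b ∈ (Finset.Icc (1 : ℤ) (n : ℤ)).erase 1,
      (if -(u 1) < u b ∧ u b < u 1 then (1 : ℤ) else 0) = u 1 - 1 := by
    have hsplit := Finset.add_sum_erase (Finset.Icc (1 : ℤ) (n : ℤ))
      (fun b => if -(u 1) < u b ∧ u b < u 1 then (1 : ℤ) else 0) hjS
    rw [if_neg (fun h => lt_irrefl _ h.2)] at hsplit
    have hSc := count_abs hu (by omega : 1 ≤ u 1) han
    linarith
  have hd1 := invZ_decomp n hjS (u * flip 1)
  have hd2 := invZ_decomp n hjS u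
  have hrow : (∑ b ∈ (Finset.Icc (1 : ℤ) (n : ℤ)).erase 1,
      if 1 < b ∧ (u * flip 1) b < (u * flip 1) 1 then (1 : ℤ) else 0)
      = ∑ b ∈ (Finset.Icc (1 : ℤ) (n : ℤ)).erase 1,
        ((if 1 < b ∧ u b < u 1 then (1 : ℤ) else 0)
          - if -(u 1) < u b ∧ u b < u 1 then (1 : ℤ) else 0) := by
    apply Finset.sum_congr rfl
    intro b hb
    have hb' := hb
    rw [Finset.mem_erase, Finset.mem_Icc] at hb'
    have hne1 : u b ≠ u 1 := fun h => hb'.1 (u.injective h)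
    have hne2 : u b ≠ -(u 1) := by
      intro h
      have h3 : u b = u (-1) := by rw [hu.1]; exact h
      have h4 := u.injective h3
      omega
    rw [happ b hb, happj]
    split_ifs <;> omega
  have hcolL : (∑ x ∈ (Finset.Icc (1 : ℤ) (n : ℤ)).erase 1,
      if x < 1 ∧ (u * flip 1) 1 < (u * flip 1) x then (1 : ℤ) else 0) = 0 :=
    Finset.sum_eq_zero fun x hx => by
      rw [Finset.mem_erase, Finset.mem_Icc] at hx
      exact if_neg (fun h => absurd h.1 (by omega))
  have hcolR : (∑ x ∈ (Finset.Icc (1 : ℤ) (n : ℤ)).erase 1,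
      if x < 1 ∧ u 1 < u x then (1 : ℤ) else 0) = 0 :=
    Finset.sum_eq_zero fun x hx => by
      rw [Finset.mem_erase, Finset.mem_Icc] at hx
      exact if_neg (fun h => absurd h.1 (by omega))
  have hcore : (∑ x ∈ (Finset.Icc (1 : ℤ) (n : ℤ)).erase 1,
      ∑ b ∈ (Finset.Icc (1 : ℤ) (n : ℤ)).erase 1,
        if x < b ∧ (u * flip 1) b < (u * flip 1) x then (1 : ℤ) else 0)
      = ∑ x ∈ (Finset.Icc (1 : ℤ) (n : ℤ)).erase 1,
        ∑ b ∈ (Finset.Icc (1 : ℤ) (n : ℤ)).erase 1,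
          if x < b ∧ u b < u x then (1 : ℤ) else 0 :=
    Finset.sum_congr rfl fun x hx => Finset.sum_congr rfl fun b hb => by
      rw [happ b hb, happ x hx]
  rw [hrow, hcolL, hcore] at hd1
  rw [hcolR] at hd2
  rw [Finset.sum_sub_distrib] at hd1
  have hnegL := Finset.add_sum_erase (Finset.Icc (1 : ℤ) (n : ℤ))
    (fun k => if (u * flip 1) k < 0 then -((u * flip 1) k) else 0) hjS
  rw [happj, if_pos (by omega : -(u 1) < 0), neg_neg] at hnegL
  have htail : (∑ k ∈ (Finset.Icc (1 : ℤ) (n : ℤ)).erase 1,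
      if (u * flip 1) k < 0 then -((u * flip 1) k) else 0)
      = ∑ k ∈ (Finset.Icc (1 : ℤ) (n : ℤ)).erase 1, if u k < 0 then -(u k) else 0 :=
    Finset.sum_congr rfl fun k hk => by rw [happ k hk]
  rw [htail] at hnegL
  have hnegR := Finset.add_sum_erase (Finset.Icc (1 : ℤ) (n : ℤ))
    (fun k => if u k < 0 then -(u k) else 0) hjS
  rw [if_neg (by omega : ¬ u 1 < 0), zero_add] at hnegR
  show invZ n (u * flip 1) + negZ n (u * flip 1) = invZ n u + negZ n u + 1
  unfold negZ
  rw [hd1, hd2, ← hnegL, ← hnegR]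
  linarith

lemma NZ_mul_t_neg {n : ℕ} (hn : 1 ≤ n) {u : Equiv.Perm ℤ} (hu : u ∈ W n)
    (ha : u 1 < 0) : NZ n (u * t) + 1 = NZ n u := by
  have hjn : (1 : ℤ) ≤ (n : ℤ) := by exact_mod_cast hn
  have hmem : u * t ∈ W n := mul_mem_W hu (t_mem_W hn)
  have happj : (u * t) 1 = -(u 1) := by
    rw [← flip_one_eq_t, Equiv.Perm.mul_apply, flip_apply _ _ (le_refl 1), if_pos rfl, hu.1]
  have h := NZ_mul_t_pos hn hmem (by rw [happj]; omega)
  rw [← flip_one_eq_t, mul_assoc, flip_mul_self, mul_one] at h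
  rw [← flip_one_eq_t]
  omega

/-! ### Identification of `len` with the statistic `NZ` -/

lemma eq_one_of_NZ_eq_zero {n : ℕ} {u : Equiv.Perm ℤ} (hu : u ∈ W n) (h : NZ n u = 0) :
    u = 1 := by
  have h1 : 0 ≤ invZ n u := by
    apply Finset.sum_nonneg
    intro a _
    apply Finset.sum_nonneg
    intro b _
    split_ifs <;> omega
  have h2 : 0 ≤ negZ n u := by
    apply Finset.sum_nonneg
    intro k _
    split_ifs <;> omega
  have hNZ : invZ n u + negZ n u = 0 := h
  have hiz : invZ n u = 0 := by omega
  have hnz : negZ n u = 0 := by omega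
  have hpos : ∀ k : ℤ, 1 ≤ k → k ≤ (n : ℤ) → 0 < u k := by
    intro k hk1 hkn
    by_contra hc
    push_neg at hc
    have hne := W_ne_zero hu (show k ≠ 0 by omega)
    have hterm := (Finset.sum_eq_zero_iff_of_nonneg
      (fun x _ => by split_ifs <;> omega)).1 hnz k (Finset.mem_Icc.2 ⟨hk1, hkn⟩)
    rw [if_pos (by omega : u k < 0)] at hterm
    omega
  have hsm : ∀ a b : ℤ, 1 ≤ a → a < b → b ≤ (n : ℤ) → u a < u b := by
    intro a b ha hab hbn
    have houter := (Finset.sum_eq_zero_iff_of_nonneg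
      (fun x _ => Finset.sum_nonneg (fun y _ => by split_ifs <;> omega))).1 hiz a
      (Finset.mem_Icc.2 ⟨ha, by omega⟩)
    have hterm := (Finset.sum_eq_zero_iff_of_nonneg
      (fun y _ => by split_ifs <;> omega)).1 houter b (Finset.mem_Icc.2 ⟨by omega, hbn⟩)
    have hne : u a ≠ u b := fun hcon => by have := u.injective hcon; omega
    by_contra hcon
    push_neg at hcon
    rw [if_pos ⟨hab, by omega⟩] at hterm
    omega
  have hub : ∀ k : ℤ, 1 ≤ k → k ≤ (n : ℤ) → u k ≤ (n : ℤ) := by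
    intro k hk1 hkn
    have := W_apply_abs_le hu hk1 hkn
    rcases abs_cases (u k) with ⟨h1, _⟩ | ⟨h1, _⟩ <;> omega
  have hlb : ∀ m : ℕ, (1 + (m : ℤ)) ≤ (n : ℤ) → (1 + (m : ℤ)) ≤ u (1 + (m : ℤ)) := by
    intro m
    induction m with
    | zero =>
      intro h
      have := hpos 1 (by omega) (by omega)
      push_cast
      omega
    | succ m ihm =>
      intro h
      have h1 : (1 + (m : ℤ)) ≤ (n : ℤ) := by push_cast at h ⊢; omega
      have h2 := hsm (1 + (m : ℤ)) (1 + ((m + 1 : ℕ) : ℤ)) (by omega) (by push_cast; omega) (by push_cast at h ⊢; omega)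
      have h3 := ihm h1
      push_cast at h2 ⊢
      omega
  have hubm : ∀ m : ℕ, 1 ≤ (n : ℤ) - (m : ℤ) → u ((n : ℤ) - (m : ℤ)) ≤ (n : ℤ) - (m : ℤ) := by
    intro m
    induction m with
    | zero =>
      intro h
      have := hub ((n : ℤ) - 0) (by omega) (by omega)
      push_cast at this ⊢
      omega
    | succ m ihm =>
      intro h
      have h1 : 1 ≤ (n : ℤ) - (m : ℤ) := by push_cast at h ⊢; omega
      have h2 := hsm ((n : ℤ) - ((m + 1 : ℕ) : ℤ)) ((n : ℤ) - (m : ℤ)) (by push_cast at h ⊢; omega) (by push_cast; omega) (by omega)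
      have h3 := ihm h1
      push_cast at h2 ⊢
      omega
  have hid : ∀ k : ℤ, 1 ≤ k → k ≤ (n : ℤ) → u k = k := by
    intro k hk1 hkn
    have e1 : 1 + (((k - 1).toNat : ℕ) : ℤ) = k := by omega
    have h1 := hlb (k - 1).toNat (by omega)
    rw [e1] at h1
    have e2 : (n : ℤ) - ((((n : ℤ) - k).toNat : ℕ) : ℤ) = k := by omega
    have h2 := hubm ((n : ℤ) - k).toNat (by omega)
    rw [e2] at h2
    omega
  apply Equiv.ext
  intro x
  simp only [Equiv.Perm.one_apply]
  rcases lt_trichotomy x 0 with hx | rfl | hx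
  · rcases le_or_gt (-x) (n : ℤ) with hxn | hxn
    · have hodd : u (-(-x)) = -(u (-x)) := hu.1 (-x)
      rw [neg_neg] at hodd
      rw [hodd, hid (-x) (by omega) hxn]
      omega
    · exact hu.2 x (by rcases abs_cases x with ⟨h1, _⟩ | ⟨h1, _⟩ <;> omega)
  · exact W_zero hu
  · rcases le_or_gt x (n : ℤ) with hxn | hxn
    · exact hid x (by omega) hxn
    · exact hu.2 x (by rcases abs_cases x with ⟨h1, _⟩ | ⟨h1, _⟩ <;> omega)

lemma gens_subset_W {n : ℕ} (hn : 1 ≤ n) : ∀ g ∈ gens n, g ∈ W n := by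
  intro g hg
  simp only [gens, Set.mem_insert_iff, Set.mem_setOf_eq] at hg
  rcases hg with rfl | ⟨i, hi1, hi2, rfl⟩
  · exact t_mem_W hn
  · have h1 : (1 : ℤ) ≤ (i : ℤ) := by exact_mod_cast hi1
    have h2 : i + 1 ≤ n := by omega
    exact s_mem_W h1 (by exact_mod_cast h2)

lemma exists_word {n : ℕ} (hn : 1 ≤ n) : ∀ m : ℕ, ∀ u : Equiv.Perm ℤ, u ∈ W n → NZ n u = m →
    ∃ l : List (Equiv.Perm ℤ), (∀ g ∈ l, g ∈ gens n) ∧ l.prod = u ∧ (l.length : ℤ) = NZ n u := by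
  intro m
  induction m using Nat.strong_induction_on with
  | _ m ih =>
    intro u hu hm
    rcases Nat.eq_zero_or_pos m with rfl | hmpos
    · have hu1 : u = 1 := eq_one_of_NZ_eq_zero hu (by exact_mod_cast hm)
      refine ⟨[], by simp, by simp [hu1], by simp [hm]⟩
    · by_cases hneg1 : u 1 < 0
      · have hstep := NZ_mul_t_neg hn hu hneg1
        have humem : u * t ∈ W n := mul_mem_W hu (t_mem_W hn)
        obtain ⟨l, hl1, hl2, hl3⟩ := ih (m - 1) (by omega) (u * t) humem (by push_cast; omega)
        refine ⟨l ++ [t], ?_, ?_, ?_⟩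
        · intro g hg
          rcases List.mem_append.1 hg with hg' | hg'
          · exact hl1 g hg'
          · rw [List.mem_singleton] at hg'
            rw [hg']
            exact Set.mem_insert _ _
        · rw [List.prod_append, List.prod_singleton, hl2, mul_assoc]
          have htt : t * t = 1 := by simp [t, Equiv.swap_mul_self]
          rw [htt, mul_one]
        · rw [List.length_append, List.length_singleton]
          push_cast
          push_cast at hl3
          omega
      · have hpos1 : 0 < u 1 := by
          have := W_ne_zero hu (show (1 : ℤ) ≠ 0 by omega)
          omega
        by_cases hdes : ∃ k : ℕ, 1 ≤ k ∧ (k : ℤ) + 1 ≤ (n : ℤ) ∧ u ((k : ℤ) + 1) < u (k : ℤ)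
        · obtain ⟨k, hk1, hkn, hkd⟩ := hdes
          have hkZ : (1 : ℤ) ≤ (k : ℤ) := by exact_mod_cast hk1
          have hstep := NZ_mul_s_desc u hkZ hkn hkd
          have humem : u * s (k : ℤ) ∈ W n := mul_mem_W hu (s_mem_W hkZ hkn)
          obtain ⟨l, hl1, hl2, hl3⟩ := ih (m - 1) (by omega) (u * s (k : ℤ)) humem
            (by push_cast; omega)
          refine ⟨l ++ [s (k : ℤ)], ?_, ?_, ?_⟩
          · intro g hg
            rcases List.mem_append.1 hg with hg' | hg'
            · exact hl1 g hg'
            · rw [List.mem_singleton] at hg'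
              rw [hg']
              refine Set.mem_insert_iff.2 (Or.inr ⟨k, hk1, ?_, rfl⟩)
              have : k + 1 ≤ n := by exact_mod_cast hkn
              omega
          · rw [List.prod_append, List.prod_singleton, hl2, mul_assoc, s_mul_self _ hkZ,
              mul_one]
          · rw [List.length_append, List.length_singleton]
            push_cast
            push_cast at hl3
            omega
        · exfalso
          push_neg at hdes
          have hadj : ∀ a : ℤ, 1 ≤ a → a + 1 ≤ (n : ℤ) → u a < u (a + 1) := by
            intro a ha han
            have h2 := hdes a.toNat (by omega) (by omega)
            rw [show ((a.toNat : ℕ) : ℤ) = a from by omega] at h2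
            have h3 : u a ≠ u (a + 1) := fun hcon => by have := u.injective hcon; omega
            omega
          have hmono2 : ∀ d : ℕ, ∀ a : ℤ, 1 ≤ a → a + (d : ℤ) + 1 ≤ (n : ℤ) →
              u a < u (a + (d : ℤ) + 1) := by
            intro d
            induction d with
            | zero =>
              intro a ha han
              have := hadj a ha (by push_cast at han ⊢; omega)
              push_cast
              push_cast at this
              convert this using 2
              omega
            | succ d ihd =>
              intro a ha han
              have h1 := ihd a ha (by push_cast at han ⊢; omega)
              have h2 := hadj (a + (d : ℤ) + 1) (by omega) (by push_cast at han ⊢; omega)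
              have he : a + ((d + 1 : ℕ) : ℤ) + 1 = (a + (d : ℤ) + 1) + 1 := by push_cast; ring
              rw [he]
              omega
          have hposall : ∀ d : ℕ, (1 + (d : ℤ)) ≤ (n : ℤ) → 0 < u (1 + (d : ℤ)) := by
            intro d
            induction d with
            | zero =>
              intro h
              simpa using hpos1
            | succ d ihd =>
              intro h
              have h1 := ihd (by push_cast at h ⊢; omega)
              have h2 := hadj (1 + (d : ℤ)) (by omega) (by push_cast at h ⊢; omega)
              have he : 1 + ((d + 1 : ℕ) : ℤ) = (1 + (d : ℤ)) + 1 := by push_cast; ring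
              rw [he]
              omega
          have hiz : invZ n u = 0 := by
            apply Finset.sum_eq_zero
            intro a haS
            apply Finset.sum_eq_zero
            intro b hbS
            rw [Finset.mem_Icc] at haS hbS
            apply if_neg
            rintro ⟨hab, hba⟩
            have := hmono2 (b - a - 1).toNat a haS.1 (by omega)
            rw [show a + (((b - a - 1).toNat : ℕ) : ℤ) + 1 = b from by omega] at this
            omega
          have hnz : negZ n u = 0 := by
            apply Finset.sum_eq_zero
            intro k hkS
            rw [Finset.mem_Icc] at hkS
            apply if_neg
            have := hposall (k - 1).toNat (by omega)
            rw [show (1 : ℤ) + (((k - 1).toNat : ℕ) : ℤ) = k from by omega] at this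
            omega
          have hNZ0 : NZ n u = 0 := by
            show invZ n u + negZ n u = 0
            rw [hiz, hnz, add_zero]
          omega

lemma NZ_le_word {n : ℕ} (hn : 1 ≤ n) : ∀ l : List (Equiv.Perm ℤ), (∀ g ∈ l, g ∈ gens n) →
    l.prod ∈ W n ∧ NZ n l.prod ≤ (l.length : ℤ) := by
  intro l
  induction l using List.reverseRecOn with
  | nil =>
    intro _
    refine ⟨by simpa using one_mem_W n, ?_⟩
    simp [NZ_one]
  | append_singleton l g ihl =>
    intro hl
    have hl' : ∀ x ∈ l, x ∈ gens n := fun x hx => hl x (by simp [hx])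
    obtain ⟨hWm, hlen⟩ := ihl hl'
    have hg : g ∈ gens n := hl g (by simp)
    have hgW : g ∈ W n := gens_subset_W hn g hg
    rw [List.prod_append, List.prod_singleton, List.length_append, List.length_singleton]
    refine ⟨mul_mem_W hWm hgW, ?_⟩
    simp only [gens, Set.mem_insert_iff, Set.mem_setOf_eq] at hg
    rcases hg with rfl | ⟨i, hi1, hi2, rfl⟩
    · rcases lt_trichotomy (l.prod 1) 0 with hc | hc | hc
      · have := NZ_mul_t_neg hn hWm hc
        push_cast
        omega
      · exact absurd hc (W_ne_zero hWm (by omega))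
      · have := NZ_mul_t_pos hn hWm hc
        push_cast
        omega
    · have hiZ : (1 : ℤ) ≤ (i : ℤ) := by exact_mod_cast hi1
      have hin : (i : ℤ) + 1 ≤ (n : ℤ) := by
        have : i + 1 ≤ n := by omega
        exact_mod_cast this
      rcases lt_trichotomy (l.prod (i : ℤ)) (l.prod ((i : ℤ) + 1)) with hc | hc | hc
      · have := NZ_mul_s l.prod hiZ hin hc
        push_cast
        omega
      · exfalso
        have := l.prod.injective hc
        omega
      · have := NZ_mul_s_desc l.prod hiZ hin hc
        push_cast
        omega

lemma len_eq_NZ {n : ℕ} (hn : 1 ≤ n) {u : Equiv.Perm ℤ} (hu : u ∈ W n) :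
    (len n u : ℤ) = NZ n u := by
  obtain ⟨l, hl1, hl2, hl3⟩ := exists_word hn (NZ n u).toNat u hu
    (Int.toNat_of_nonneg (NZ_nonneg n u)).symm
  have hmem : l.length ∈ {k | ∃ l' : List (Equiv.Perm ℤ),
      l'.length = k ∧ (∀ g ∈ l', g ∈ gens n) ∧ l'.prod = u} := ⟨l, rfl, hl1, hl2⟩
  have hub : len n u ≤ l.length := Nat.sInf_le hmem
  obtain ⟨l0, hlen0, hg0, hp0⟩ := Nat.sInf_mem (⟨l.length, hmem⟩ : Set.Nonempty _)
  have hlow := (NZ_le_word hn l0 hg0).2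
  rw [hp0, hlen0] at hlow
  have hdef : len n u = sInf {k | ∃ l' : List (Equiv.Perm ℤ),
      l'.length = k ∧ (∀ g ∈ l', g ∈ gens n) ∧ l'.prod = u} := rfl
  rw [← hdef] at hlow
  omega

end Aux


theorem statement7 (n : ℕ) (hn : 2 ≤ n) (w : Equiv.Perm ℤ) (hw : w ∈ Area n)
    (i : ℕ) (hi1 : 1 ≤ i) (hi2 : i ≤ n - 1) :
    len n (w * s (i : ℤ)) < len n w ↔ len n w < len n (w * tt i) := by
  obtain ⟨hwW, hA⟩ := hw
  have hn1 : 1 ≤ n := by omega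
  have hiZ1 : (1 : ℤ) ≤ (i : ℤ) := by exact_mod_cast hi1
  have hinat : i + 1 ≤ n := by omega
  have hinZ : (i : ℤ) + 1 ≤ (n : ℤ) := by exact_mod_cast hinat
  have hiZn : (i : ℤ) ≤ (n : ℤ) := by omega
  have hsW : s (i : ℤ) ∈ W n := s_mem_W hiZ1 hinZ
  have httW : w * tt i ∈ W n := by
    rw [tt_eq_flip hi1]
    exact mul_mem_W hwW (flip_mem_W hiZ1 hiZn)
  have hwsW : w * s (i : ℤ) ∈ W n := mul_mem_W hwW hsW
  have e1 := len_eq_NZ hn1 hwW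
  have e2 := len_eq_NZ hn1 hwsW
  have e3 := len_eq_NZ hn1 httW
  rw [tt_eq_flip hi1] at e3 ⊢
  have hne0i : w (i : ℤ) ≠ 0 := W_ne_zero hwW (by omega)
  have hne0i1 : w ((i : ℤ) + 1) ≠ 0 := W_ne_zero hwW (by omega)
  have hnei : w (i : ℤ) ≠ w ((i : ℤ) + 1) := fun h => by have := w.injective h; omega
  have hpair := hA (i : ℤ) ((i : ℤ) + 1) hiZ1 (by omega) hinZ
  have key : w ((i : ℤ) + 1) < w (i : ℤ) ↔ 0 < w (i : ℤ) := by
    constructor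
    · intro h
      by_contra h0
      push_neg at h0
      have hwi : w (i : ℤ) < 0 := by omega
      rcases lt_trichotomy (w ((i : ℤ) + 1)) 0 with h' | h' | h'
      · have := hpair.1 hwi h'
        omega
      · exact hne0i1 h'
      · omega
    · intro h
      rcases lt_trichotomy (w ((i : ℤ) + 1)) 0 with h' | h' | h'
      · omega
      · exact absurd h' hne0i1
      · have := hpair.2 h h'
        omega
  constructor
  · intro hlen
    have hNZ : NZ n (w * s (i : ℤ)) < NZ n w := by omega
    have hdesc : w ((i : ℤ) + 1) < w (i : ℤ) := by
      by_contra hc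
      push_neg at hc
      have hasc : w (i : ℤ) < w ((i : ℤ) + 1) := by omega
      have := NZ_mul_s w hiZ1 hinZ hasc
      omega
    have hpos := key.1 hdesc
    have := NZ_mul_flip_pos hwW hiZ1 hiZn hpos
    omega
  · intro hlen
    have hNZ : NZ n w < NZ n (w * flip (i : ℤ)) := by omega
    have hpos : 0 < w (i : ℤ) := by
      by_contra hc
      push_neg at hc
      have hneg : w (i : ℤ) < 0 := by omega
      have := NZ_mul_flip_neg hwW hiZ1 hiZn hneg
      omega
    have hdesc := key.2 hpos
    have := NZ_mul_s_desc w hiZ1 hinZ hdesc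
    omega

end BnPaper
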